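/- arXiv:1202.0657 — 5 statements merged into one kernel-verified Lean document; each statement's English description precedes it below -/
import Mathlib

section
/- Let f : ℝ → ℝ be continuously differentiable with compact support and f(0) = 0. Then ∫_{-∞}^{0} f(z)² / (z²(1-z)²) dz ≤ 4 ∫_{-∞}^{0} f′(z)² dz. -/
open MeasureTheory Set Filter Topology
open scoped ENNReal

/-- Auxiliary integrability criterion: a measurable function on `Iio 0` bounded by a
constant on `Icc (-R) 0` and vanishing below `-R` is integrable on `Iio 0`. -/
lemma hardy_aux_integrableOn {g : ℝ → ℝ} (R C : ℝ)
    (hm : AEStronglyMeasurable g (volume.restrict (Iio (0:ℝ))))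
    (hbd : ∀ z ∈ Iio (0:ℝ), |g z| ≤ (Icc (-R) 0).indicator (fun _ => C) z) :
    IntegrableOn g (Iio (0:ℝ)) := by
  have hind : Integrable ((Icc (-R) (0:ℝ)).indicator (fun _ => C))
      (volume.restrict (Iio (0:ℝ))) := by
    refine Integrable.restrict ?_
    rw [integrable_indicator_iff measurableSet_Icc]
    exact integrableOn_const measure_Icc_lt_top.ne
  refine Integrable.mono' hind hm ?_
  refine (ae_restrict_iff' measurableSet_Iio).2 (ae_of_all _ fun z hz => ?_)
  simpa using hbd z hz

/-- First Hardy-type inequality of Lemma 12.3: for `f : ℝ → ℝ` continuously differentiable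
with compact support and `f 0 = 0`,
`∫_{-∞}^{0} f(z)² / (z²(1-z)²) dz ≤ 4 ∫_{-∞}^{0} f′(z)² dz`. -/
theorem hardy_inequality_one (f : ℝ → ℝ) (hf : ContDiff ℝ 1 f)
    (hsupp : HasCompactSupport f) (h0 : f 0 = 0) :
    ∫⁻ z in Set.Iio (0 : ℝ), ENNReal.ofReal (f z ^ 2 / (z ^ 2 * (1 - z) ^ 2))
      ≤ 4 * ∫⁻ z in Set.Iio (0 : ℝ), ENNReal.ofReal (deriv f z ^ 2) := by
  have hfc : Continuous f := hf.continuous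
  have hf'c : Continuous (deriv f) := hf.continuous_deriv le_rfl
  have hfd : Differentiable ℝ f := hf.differentiable one_ne_zero
  -- bound on the derivative
  obtain ⟨C, hC⟩ : ∃ C, ∀ x, ‖deriv f x‖ ≤ C :=
    hf'c.bounded_above_of_compact_support hsupp.deriv
  have hC0 : 0 ≤ C := le_trans (norm_nonneg _) (hC 0)
  have hC' : ∀ x, |deriv f x| ≤ C := fun x => hC x
  -- Lipschitz-type bound : |f z| ≤ C * |z|
  have hlip : ∀ z : ℝ, |f z| ≤ C * |z| := by
    intro z
    have := convex_univ.norm_image_sub_le_of_norm_deriv_le (s := (univ : Set ℝ))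
      (fun x _ => hfd x) (fun x _ => hC x) (mem_univ 0) (mem_univ z)
    simpa [h0, Real.norm_eq_abs] using this
  have hquot : ∀ z : ℝ, |f z / z| ≤ C := by
    intro z
    rcases eq_or_ne z 0 with rfl | hz
    · simpa using hC0
    · rw [abs_div, div_le_iff₀ (abs_pos.2 hz)]
      exact hlip z
  -- support radius
  obtain ⟨R, hR⟩ : ∃ R, ∀ z : ℝ, z < -R → f z = 0 := by
    obtain ⟨R, hR⟩ := hsupp.isCompact.isBounded.subset_closedBall 0
    refine ⟨R, fun z hz => ?_⟩
    apply image_eq_zero_of_notMem_tsupport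
    intro hmem
    have h2 := hR hmem
    simp only [Metric.mem_closedBall, Real.dist_eq, sub_zero] at h2
    have : -R ≤ z := neg_le_of_abs_le h2
    linarith
  -- integrability of (deriv f)^2
  have hif' : Integrable (fun z => deriv f z ^ 2) := by
    have hcs : HasCompactSupport (fun z => deriv f z ^ 2) := by
      have h := hsupp.deriv.mul_right (f' := deriv f)
      have heq : (deriv f * deriv f) = (fun z => deriv f z ^ 2) := by
        funext z; simp [pow_two]
      rwa [heq] at h
    exact (hf'c.pow 2).integrable_of_hasCompactSupport hcs
  -- integrability of f^2/z^2 on Iio 0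
  have hint1 : IntegrableOn (fun z => f z ^ 2 / z ^ 2) (Iio (0:ℝ)) := by
    refine hardy_aux_integrableOn R (C ^ 2)
      (((hfc.pow 2).measurable.div (measurable_id.pow_const 2)).aestronglyMeasurable) ?_
    intro z hz
    rcases lt_or_ge z (-R) with hzR | hzR
    · rw [hR z hzR]
      simpa using indicator_nonneg (fun _ _ => sq_nonneg C) z
    · rw [indicator_of_mem (mem_Icc.mpr ⟨hzR, le_of_lt hz⟩)]
      rw [← div_pow, abs_pow]
      exact pow_le_pow_left₀ (abs_nonneg _) (hquot z) 2
  -- integrability of f * f' / z on Iio 0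
  have hint2 : IntegrableOn (fun z => f z * deriv f z / z) (Iio (0:ℝ)) := by
    refine hardy_aux_integrableOn R (C * C)
      (((hfc.measurable.mul hf'c.measurable).div measurable_id).aestronglyMeasurable) ?_
    intro z hz
    rcases lt_or_ge z (-R) with hzR | hzR
    · rw [hR z hzR]
      simpa using indicator_nonneg (fun _ _ => mul_nonneg hC0 hC0) z
    · rw [indicator_of_mem (mem_Icc.mpr ⟨hzR, le_of_lt hz⟩)]
      have h1 : f z * deriv f z / z = (f z / z) * deriv f z := by ring
      rw [h1, abs_mul]
      exact mul_le_mul (hquot z) (hC' z) (abs_nonneg _) hC0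
  -- integrability of the LHS integrand on Iio 0
  have hint0 : IntegrableOn (fun z => f z ^ 2 / (z ^ 2 * (1 - z) ^ 2)) (Iio (0:ℝ)) := by
    refine hardy_aux_integrableOn R (C ^ 2)
      (((hfc.pow 2).measurable.div
        ((measurable_id.pow_const 2).mul ((measurable_const.sub measurable_id).pow_const 2))).aestronglyMeasurable) ?_
    intro z hz
    rcases lt_or_ge z (-R) with hzR | hzR
    · rw [hR z hzR]
      simpa using indicator_nonneg (fun _ _ => sq_nonneg C) z
    · rw [indicator_of_mem (mem_Icc.mpr ⟨hzR, le_of_lt hz⟩)]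
      have hz0 : z < 0 := hz
      have h1z : (1:ℝ) ≤ (1 - z) ^ 2 := by nlinarith
      have hz2 : (0:ℝ) < z ^ 2 := by nlinarith
      have hle : f z ^ 2 / (z ^ 2 * (1 - z) ^ 2) ≤ f z ^ 2 / z ^ 2 := by
        apply div_le_div_of_nonneg_left (sq_nonneg _) hz2
        nlinarith
      have hnn : 0 ≤ f z ^ 2 / (z ^ 2 * (1 - z) ^ 2) := by positivity
      rw [abs_of_nonneg hnn]
      calc f z ^ 2 / (z ^ 2 * (1 - z) ^ 2) ≤ f z ^ 2 / z ^ 2 := hle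
        _ = |f z / z| ^ 2 := by rw [← div_pow, ← abs_pow, abs_of_nonneg (sq_nonneg _)]
        _ ≤ C ^ 2 := pow_le_pow_left₀ (abs_nonneg _) (hquot z) 2
  -- the auxiliary function and its derivative
  set G : ℝ → ℝ := fun z => 2 * f z ^ 2 / z with hGdef
  set G' : ℝ → ℝ := fun z => (4 * f z * deriv f z * z - 2 * f z ^ 2) / z ^ 2 with hG'def
  have hGderiv : ∀ z ∈ Iio (0:ℝ), HasDerivAt G (G' z) z := by
    intro z hz
    have hz0 : z ≠ 0 := ne_of_lt hz
    have hnum : HasDerivAt (fun z => 2 * f z ^ 2) (4 * f z * deriv f z) z := by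
      have h1 : HasDerivAt f (deriv f z) z := (hfd z).hasDerivAt
      have h2 := (h1.pow 2).const_mul (2:ℝ)
      exact h2.congr_deriv (by simp; ring)
    have h3 := hnum.div (hasDerivAt_id z) hz0
    simp only [id_eq, mul_one] at h3
    exact h3
  have hG'int : IntegrableOn G' (Iio (0:ℝ)) := by
    have hcongr : ∀ z ∈ Iio (0:ℝ),
        4 * (f z * deriv f z / z) - 2 * (f z ^ 2 / z ^ 2) = G' z := by
      intro z hz
      have hz0 : z ≠ 0 := ne_of_lt hz
      show _ = (4 * f z * deriv f z * z - 2 * f z ^ 2) / z ^ 2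
      field_simp
    exact IntegrableOn.congr_fun ((hint2.const_mul 4).sub (hint1.const_mul 2))
      hcongr measurableSet_Iio
  -- continuity of G at 0 from the left
  have hGcont : ContinuousWithinAt G (Iic 0) 0 := by
    have hG0 : G 0 = 0 := by simp [hGdef, h0]
    rw [ContinuousWithinAt, hG0]
    refine squeeze_zero_norm (a := fun z => 2 * C * |f z|) ?_ ?_
    · intro z
      rcases eq_or_ne z 0 with rfl | hz
      · simp [hGdef, h0]
      · have : G z = (2 * f z) * (f z / z) := by
          rw [hGdef]; field_simp
        rw [Real.norm_eq_abs, this, abs_mul, abs_mul]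
        have := hquot z
        calc |2| * |f z| * |f z / z| ≤ |2| * |f z| * C := by
              apply mul_le_mul_of_nonneg_left this (by positivity)
          _ = 2 * C * |f z| := by rw [abs_two]; ring
    · have : Tendsto (fun z => 2 * C * |f z|) (𝓝 0) (𝓝 (2 * C * |f 0|)) :=
        (continuous_const.mul hfc.abs).tendsto 0
      rw [h0] at this
      simpa using this.mono_left nhdsWithin_le_nhds
  -- G tends to 0 at -∞
  have hGbot : Tendsto G atBot (𝓝 0) := by
    apply Tendsto.congr' _ tendsto_const_nhds
    filter_upwards [eventually_lt_atBot (-R)] with z hz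
    simp [hGdef, hR z hz]
  -- FTC on (-∞, 0]
  have hFTC : ∫ z in Iio (0:ℝ), G' z = 0 := by
    have hG'int' : IntegrableOn G' (Iic (0:ℝ)) :=
      (integrableOn_Iic_iff_integrableOn_Iio (by simp)).2 hG'int
    have := integral_Iic_of_hasDerivAt_of_tendsto hGcont hGderiv hG'int' hGbot
    rw [integral_Iic_eq_integral_Iio] at this
    simpa [hGdef, h0] using this
  -- the real-valued inequality
  have hreal : ∫ z in Iio (0:ℝ), f z ^ 2 / (z ^ 2 * (1 - z) ^ 2)
      ≤ 4 * ∫ z in Iio (0:ℝ), deriv f z ^ 2 := by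
    have step1 : ∫ z in Iio (0:ℝ), f z ^ 2 / (z ^ 2 * (1 - z) ^ 2)
        ≤ ∫ z in Iio (0:ℝ), f z ^ 2 / z ^ 2 := by
      apply setIntegral_mono_on hint0 hint1 measurableSet_Iio
      intro z hz
      have hz0 : z < 0 := hz
      have hz2 : (0:ℝ) < z ^ 2 := by nlinarith
      apply div_le_div_of_nonneg_left (sq_nonneg _) hz2
      nlinarith
    have step2 : ∫ z in Iio (0:ℝ), f z ^ 2 / z ^ 2
        ≤ ∫ z in Iio (0:ℝ), (4 * deriv f z ^ 2 - G' z) := by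
      have hsub : IntegrableOn (fun z => 4 * deriv f z ^ 2 - G' z) (Iio (0:ℝ)) := by
        have := (hif'.integrableOn.const_mul 4).sub hG'int
        exact this
      apply setIntegral_mono_on hint1 hsub measurableSet_Iio
      intro z hz
      have hz0 : z ≠ 0 := ne_of_lt hz
      have key : 4 * deriv f z ^ 2 - G' z - f z ^ 2 / z ^ 2
          = (2 * deriv f z - f z / z) ^ 2 := by
        show 4 * deriv f z ^ 2 - (4 * f z * deriv f z * z - 2 * f z ^ 2) / z ^ 2
            - f z ^ 2 / z ^ 2 = _
        field_simp
        ring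
      nlinarith [sq_nonneg (2 * deriv f z - f z / z)]
    have step3 : ∫ z in Iio (0:ℝ), (4 * deriv f z ^ 2 - G' z)
        = 4 * ∫ z in Iio (0:ℝ), deriv f z ^ 2 := by
      rw [integral_sub (hif'.integrableOn.const_mul 4) hG'int, hFTC, sub_zero,
        integral_const_mul]
    linarith
  -- convert to lintegrals
  have hnn0 : 0 ≤ᵐ[volume.restrict (Iio (0:ℝ))]
      fun z => f z ^ 2 / (z ^ 2 * (1 - z) ^ 2) := ae_of_all _ fun z => by positivity
  have hnn' : 0 ≤ᵐ[volume.restrict (Iio (0:ℝ))] fun z => deriv f z ^ 2 :=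
    ae_of_all _ fun z => sq_nonneg _
  rw [← ofReal_integral_eq_lintegral_ofReal hint0 hnn0,
    ← ofReal_integral_eq_lintegral_ofReal hif'.integrableOn hnn']
  rw [show (4:ℝ≥0∞) = ENNReal.ofReal 4 by norm_num,
    ← ENNReal.ofReal_mul (by norm_num : (0:ℝ) ≤ 4)]
  exact ENNReal.ofReal_le_ofReal hreal
end

section
/- There is a constant C > 0 such that for every continuously differentiable compactly supported f : ℝ → ℝ with f(0) = 0 one has ∫_{-∞}^{0} ((1-z)/z)² f(z)² dz ≤ C ∫_{-∞}^{0} ( f(z)² + f′(z)² ) dz. -/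
set_option maxHeartbeats 1000000

open MeasureTheory Set Filter

private lemma key_interval (f : ℝ → ℝ) (hf : ContDiff ℝ 1 f) (hsupp : HasCompactSupport f)
    {a b : ℝ} (hab : a ≤ b) (hb : b < 0) :
    ∫⁻ z in Set.Ioo a b, ENNReal.ofReal ((f z / z) ^ 2)
      ≤ ENNReal.ofReal (2 * (f b ^ 2 / (-b)))
        + ENNReal.ofReal (4 * ∫ z in Set.Iio (0 : ℝ), (deriv f z) ^ 2) := by
  have hfc : Continuous f := hf.continuous
  have hfc' : Continuous (deriv f) := hf.continuous_deriv le_rfl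
  set I : ℝ := ∫ z in Set.Iio (0 : ℝ), (deriv f z) ^ 2 with hI
  -- integrability of (deriv f)^2 on Iio 0
  have hInt : Integrable (fun z => (deriv f z) ^ 2) :=
    ((hfc'.pow 2).integrable_of_hasCompactSupport
      (hsupp.deriv.comp_left (g := fun x : ℝ => x ^ 2) (by simp) :))
  -- every point of uIcc a b is negative
  have hneg : ∀ z ∈ Set.uIcc a b, z < 0 := by
    intro z hz
    rw [Set.uIcc_of_le hab] at hz
    exact lt_of_le_of_lt hz.2 hb
  -- derivative of g z = f z ^ 2 * (-z)⁻¹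
  set g : ℝ → ℝ := fun z => f z ^ 2 * (-z)⁻¹ with hg
  set G : ℝ → ℝ := fun z => 2 * f z * deriv f z * (-z)⁻¹ + f z ^ 2 * (1 / z ^ 2) with hG
  have hderiv : ∀ z ∈ Set.uIcc a b, HasDerivAt g (G z) z := by
    intro z hz
    have hz0 : z ≠ 0 := (hneg z hz).ne
    have h1 : HasDerivAt (fun z => f z ^ 2) (2 * f z ^ 1 * deriv f z) z :=
      ((hf.differentiable one_ne_zero z).hasDerivAt).pow 2
    have h2 : HasDerivAt (fun z : ℝ => (-z)⁻¹) (-(-1) / (-z) ^ 2) z :=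
      (hasDerivAt_neg z).inv (neg_ne_zero.mpr hz0)
    have heq : G z = 2 * f z ^ 1 * deriv f z * (-z)⁻¹ + f z ^ 2 * (-(-1) / (-z) ^ 2) := by
      simp only [hG, pow_one, neg_neg, neg_sq]
    rw [heq]
    exact h1.mul h2
  have hGcont : ContinuousOn G (Set.uIcc a b) := by
    apply ContinuousOn.add
    · exact (((continuous_const.mul hfc).mul hfc').continuousOn).mul
        ((continuousOn_id.neg).inv₀ (fun z hz => neg_ne_zero.mpr (hneg z hz).ne))
    · exact ((hfc.pow 2).continuousOn).mul
        (continuousOn_const.div ((continuous_pow 2).continuousOn)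
          (fun z hz => pow_ne_zero 2 (hneg z hz).ne))
  have hGint : IntervalIntegrable G volume a b := hGcont.intervalIntegrable
  have hFTC : ∫ z in a..b, G z = g b - g a :=
    intervalIntegral.integral_eq_sub_of_hasDerivAt hderiv hGint
  -- continuity of the two comparison functions
  have hucont : ContinuousOn (fun z => (f z / z) ^ 2) (Set.uIcc a b) :=
    ((hfc.continuousOn).div continuousOn_id (fun z hz => (hneg z hz).ne)).pow 2
  have huint : IntervalIntegrable (fun z => (f z / z) ^ 2) volume a b :=
    hucont.intervalIntegrable
  have hrint : IntervalIntegrable (fun z => 2 * G z + 4 * (deriv f z) ^ 2) volume a b :=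
    ((continuousOn_const.mul hGcont).add
      (continuousOn_const.mul ((hfc'.pow 2).continuousOn))).intervalIntegrable
  -- pointwise inequality on Icc a b
  have hpt : ∀ z ∈ Set.Icc a b, (f z / z) ^ 2 ≤ 2 * G z + 4 * (deriv f z) ^ 2 := by
    intro z hz
    have hz0 : z < 0 := lt_of_le_of_lt hz.2 hb
    have hz0' : z ≠ 0 := hz0.ne
    have e2 : f z ^ 2 * (1 / z ^ 2) = (f z / z) ^ 2 := by
      rw [div_pow, one_div, div_eq_mul_inv]
    have : G z = 2 * f z * deriv f z * (-z)⁻¹ + (f z / z) ^ 2 := by rw [hG]; rw [← e2]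
    rw [this]
    have e3 : 2 * f z * deriv f z * (-z)⁻¹ = -(2 * (f z / z) * deriv f z) := by
      rw [inv_neg, div_eq_mul_inv]; ring
    rw [e3]
    nlinarith [sq_nonneg (f z / z - 2 * deriv f z)]
  have hmono : ∫ z in a..b, (f z / z) ^ 2 ≤ ∫ z in a..b, (2 * G z + 4 * (deriv f z) ^ 2) :=
    intervalIntegral.integral_mono_on hab huint hrint hpt
  -- compute the right side
  have hsplit : ∫ z in a..b, (2 * G z + 4 * (deriv f z) ^ 2)
      = 2 * (g b - g a) + 4 * ∫ z in a..b, (deriv f z) ^ 2 := by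
    rw [intervalIntegral.integral_add ((hGint.const_mul 2))
      ((show IntervalIntegrable (fun z => deriv f z ^ 2) volume a b from
        ((hfc'.pow 2).continuousOn (s := Set.uIcc a b)).intervalIntegrable).const_mul 4),
      intervalIntegral.integral_const_mul, intervalIntegral.integral_const_mul, hFTC]
  -- ∫ z in a..b, (deriv f z)^2 ≤ I
  have hsub : ∫ z in a..b, (deriv f z) ^ 2 ≤ I := by
    rw [intervalIntegral.integral_of_le hab]
    apply setIntegral_mono_set (hInt.integrableOn)
    · exact Filter.Eventually.of_forall (fun z => sq_nonneg _)
    · exact Filter.Eventually.of_forall (fun z hz => lt_of_le_of_lt hz.2 hb)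
  have hga : 0 ≤ g a := by
    have : (0:ℝ) ≤ (-a)⁻¹ := by
      have : (0:ℝ) ≤ -a := by linarith [lt_of_le_of_lt hab hb]
      positivity
    positivity
  have hfinal : ∫ z in a..b, (f z / z) ^ 2 ≤ 2 * (f b ^ 2 / (-b)) + 4 * I := by
    have hgb : g b = f b ^ 2 / (-b) := by rw [hg]; rw [div_eq_mul_inv]
    calc ∫ z in a..b, (f z / z) ^ 2 ≤ 2 * (g b - g a) + 4 * ∫ z in a..b, (deriv f z) ^ 2 := by
          rw [← hsplit]; exact hmono
      _ ≤ 2 * g b + 4 * I := by nlinarith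
      _ = 2 * (f b ^ 2 / (-b)) + 4 * I := by rw [hgb]
  -- convert lintegral to integral
  have hIntOn : IntegrableOn (fun z => (f z / z) ^ 2) (Set.Ioo a b) := by
    have hucc : ContinuousOn (fun z => (f z / z) ^ 2) (Set.Icc a b) := by
      rw [← Set.uIcc_of_le hab]; exact hucont
    exact (hucc.integrableOn_Icc).mono_set Set.Ioo_subset_Icc_self
  have hlint : ∫⁻ z in Set.Ioo a b, ENNReal.ofReal ((f z / z) ^ 2)
      = ENNReal.ofReal (∫ z in Set.Ioo a b, (f z / z) ^ 2) := by
    rw [ofReal_integral_eq_lintegral_ofReal hIntOn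
      (Filter.Eventually.of_forall (fun z => sq_nonneg _))]
  rw [hlint]
  have : ∫ z in Set.Ioo a b, (f z / z) ^ 2 = ∫ z in a..b, (f z / z) ^ 2 := by
    rw [intervalIntegral.integral_of_le hab, integral_Ioc_eq_integral_Ioo]
  rw [this]
  calc ENNReal.ofReal (∫ z in a..b, (f z / z) ^ 2)
      ≤ ENNReal.ofReal (2 * (f b ^ 2 / (-b)) + 4 * I) := ENNReal.ofReal_le_ofReal hfinal
    _ ≤ _ := ENNReal.ofReal_add_le

private lemma hardy_core (f : ℝ → ℝ) (hf : ContDiff ℝ 1 f) (hsupp : HasCompactSupport f)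
    (h0 : f 0 = 0) :
    ∫⁻ z in Set.Iio (0 : ℝ), ENNReal.ofReal ((f z / z) ^ 2)
      ≤ ENNReal.ofReal 4 * ∫⁻ z in Set.Iio (0 : ℝ), ENNReal.ofReal ((deriv f z) ^ 2) := by
  have hfc' : Continuous (deriv f) := hf.continuous_deriv le_rfl
  have hInt : Integrable (fun z => (deriv f z) ^ 2) :=
    ((hfc'.pow 2).integrable_of_hasCompactSupport
      (hsupp.deriv.comp_left (g := fun x : ℝ => x ^ 2) (by simp) :))
  set I : ℝ := ∫ z in Set.Iio (0 : ℝ), (deriv f z) ^ 2 with hI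
  have hIeq : ENNReal.ofReal I = ∫⁻ z in Set.Iio (0 : ℝ), ENNReal.ofReal ((deriv f z) ^ 2) :=
    ofReal_integral_eq_lintegral_ofReal hInt.integrableOn
      (Filter.Eventually.of_forall (fun z => sq_nonneg _))
  -- interval exhaustion
  set s : ℕ → Set ℝ := fun n => Set.Ioo (-(n + 1 : ℝ)) (-((n : ℝ) + 1)⁻¹) with hs
  have hsmono : Monotone s := by
    intro m n hmn
    apply Set.Ioo_subset_Ioo
    · simp only [neg_le_neg_iff]
      exact add_le_add_left (Nat.cast_le.mpr hmn) 1
    · simp only [neg_le_neg_iff]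
      apply inv_anti₀
      · positivity
      · exact add_le_add_left (Nat.cast_le.mpr hmn) 1
  have hunion : (⋃ n, s n) = Set.Iio (0 : ℝ) := by
    apply Set.Subset.antisymm
    · intro z hz
      obtain ⟨n, hn⟩ := Set.mem_iUnion.mp hz
      have : z < -((n : ℝ) + 1)⁻¹ := hn.2
      have hp : (0:ℝ) < ((n : ℝ) + 1)⁻¹ := by positivity
      exact Set.mem_Iio.mpr (by linarith)
    · intro z hz
      have hz0 : z < 0 := hz
      obtain ⟨n, hn⟩ := exists_nat_gt (max (-z) (-z)⁻¹)
      refine Set.mem_iUnion.mpr ⟨n, ?_, ?_⟩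
      · have : -z < (n : ℝ) := lt_of_le_of_lt (le_max_left _ _) hn
        linarith
      · have h1 : (-z)⁻¹ < (n : ℝ) + 1 := by
          have := lt_of_le_of_lt (le_max_right _ _) hn; linarith
        have h2 : ((n : ℝ) + 1)⁻¹ < -z := by
          have hzpos : (0:ℝ) < -z := by linarith
          rw [inv_lt_comm₀ (by positivity) hzpos]
          exact h1
        linarith
  -- the sequence of lintegrals
  set x : ℕ → ENNReal := fun n => ∫⁻ z in s n, ENNReal.ofReal ((f z / z) ^ 2) with hx
  have hxmono : Monotone x := fun m n hmn => lintegral_mono_set (hsmono hmn)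
  have hxsup : ∫⁻ z in Set.Iio (0 : ℝ), ENNReal.ofReal ((f z / z) ^ 2) = ⨆ n, x n := by
    rw [← hunion, setLIntegral_iUnion_of_directed _ hsmono.directed_le]
  have hxtend : Tendsto x atTop (nhds (⨆ n, x n)) := tendsto_atTop_iSup hxmono
  -- the bound sequence
  set b : ℕ → ℝ := fun n => -((n : ℝ) + 1)⁻¹ with hb
  set y : ℕ → ENNReal := fun n =>
    ENNReal.ofReal (2 * (f (b n) ^ 2 / (-(b n)))) + ENNReal.ofReal (4 * I) with hy
  have hxy : ∀ n, x n ≤ y n := by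
    intro n
    apply key_interval f hf hsupp
    · show -((n : ℝ) + 1) ≤ -((n : ℝ) + 1)⁻¹
      have hn1 : (1:ℝ) ≤ (n : ℝ) + 1 := le_add_of_nonneg_left (Nat.cast_nonneg n)
      have h1 : ((n : ℝ) + 1)⁻¹ ≤ (n : ℝ) + 1 :=
        le_trans (inv_le_one_of_one_le₀ hn1) hn1
      linarith
    · show -((n : ℝ) + 1)⁻¹ < 0
      have : (0:ℝ) < ((n : ℝ) + 1)⁻¹ := by positivity
      linarith
  -- b n → 0 within {0}ᶜ
  have hbtend : Tendsto b atTop (nhds 0) := by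
    rw [hb]
    rw [show (0:ℝ) = -0 by ring]
    apply Tendsto.neg
    exact tendsto_one_div_add_atTop_nhds_zero_nat.congr (fun n => by rw [one_div])
  have hbne : ∀ n, b n ≠ 0 := by
    intro n; simp only [hb, neg_ne_zero]; positivity
  have hbtend' : Tendsto b atTop (nhdsWithin 0 {0}ᶜ) := by
    apply tendsto_nhdsWithin_of_tendsto_nhds_of_eventually_within _ hbtend
    exact Filter.Eventually.of_forall (fun n => hbne n)
  -- slope tendsto
  have hslope : Tendsto (fun n => f (b n) / b n) atTop (nhds (deriv f 0)) := by
    have hd : HasDerivAt f (deriv f 0) 0 := (hf.differentiable one_ne_zero 0).hasDerivAt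
    rw [hasDerivAt_iff_tendsto_slope] at hd
    have := hd.comp hbtend'
    apply this.congr
    intro n
    simp [slope_def_field, h0, div_eq_mul_inv, mul_comm]
  have hgb : Tendsto (fun n => 2 * (f (b n) ^ 2 / (-(b n)))) atTop (nhds 0) := by
    have h2 : ∀ n, 2 * (f (b n) ^ 2 / (-(b n))) = 2 * ((f (b n) / b n) ^ 2 * (-(b n))) := by
      intro n
      have hgen : ∀ c : ℝ, c ≠ 0 → 2 * (f c ^ 2 / (-c)) = 2 * ((f c / c) ^ 2 * (-c)) := by
        intro c hc
        have hnc : (-c) ≠ 0 := neg_ne_zero.mpr hc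
        rw [div_pow, div_mul_eq_mul_div, ← neg_sq c, pow_two (-c),
          mul_div_mul_right _ _ hnc]
      exact hgen (b n) (hbne n)
    rw [show (0:ℝ) = 2 * ((deriv f 0) ^ 2 * (-0)) by ring]
    apply Tendsto.congr (fun n => (h2 n).symm)
    exact ((hslope.pow 2).mul hbtend.neg).const_mul 2
  have hytend : Tendsto y atTop (nhds (0 + ENNReal.ofReal (4 * I))) := by
    apply Tendsto.add _ tendsto_const_nhds
    rw [show (0 : ENNReal) = ENNReal.ofReal 0 by simp]
    exact ENNReal.tendsto_ofReal hgb
  rw [hxsup]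
  have hle := le_of_tendsto_of_tendsto' hxtend hytend hxy
  rw [zero_add] at hle
  calc ⨆ n, x n ≤ ENNReal.ofReal (4 * I) := hle
    _ = ENNReal.ofReal 4 * ENNReal.ofReal I := ENNReal.ofReal_mul (by norm_num)
    _ = _ := by rw [hIeq]

/-- Second Hardy-type inequality of Lemma 12.3: there is a constant `C > 0` such that for
every continuously differentiable compactly supported `f : ℝ → ℝ` with `f 0 = 0`,
`∫_{-∞}^{0} ((1-z)/z)² f(z)² dz ≤ C ∫_{-∞}^{0} (f(z)² + f′(z)²) dz`. -/
theorem hardy_inequality_two :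
    ∃ C : ℝ, 0 < C ∧
      ∀ f : ℝ → ℝ, ContDiff ℝ 1 f → HasCompactSupport f → f 0 = 0 →
        ∫⁻ z in Set.Iio (0 : ℝ), ENNReal.ofReal (((1 - z) / z) ^ 2 * f z ^ 2)
          ≤ ENNReal.ofReal C *
            ∫⁻ z in Set.Iio (0 : ℝ), ENNReal.ofReal (f z ^ 2 + deriv f z ^ 2) := by
  refine ⟨10, by norm_num, ?_⟩
  intro f hf hsupp h0
  set A := ∫⁻ z in Set.Iio (0 : ℝ), ENNReal.ofReal ((f z / z) ^ 2) with hA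
  set B := ∫⁻ z in Set.Iio (0 : ℝ), ENNReal.ofReal (f z ^ 2) with hB
  set D := ∫⁻ z in Set.Iio (0 : ℝ), ENNReal.ofReal ((deriv f z) ^ 2) with hD
  have hmu : Measurable fun z : ℝ => ENNReal.ofReal ((f z / z) ^ 2) :=
    ENNReal.measurable_ofReal.comp
      (((hf.continuous.measurable).div measurable_id).pow_const 2)
  have hmw : Measurable fun z : ℝ => ENNReal.ofReal (f z ^ 2) :=
    ENNReal.measurable_ofReal.comp ((hf.continuous.measurable).pow_const 2)
  -- RHS equals B + D
  have hRHS : ∫⁻ z in Set.Iio (0 : ℝ), ENNReal.ofReal (f z ^ 2 + deriv f z ^ 2) = B + D := by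
    have : ∀ z : ℝ, ENNReal.ofReal (f z ^ 2 + deriv f z ^ 2)
        = ENNReal.ofReal (f z ^ 2) + ENNReal.ofReal (deriv f z ^ 2) :=
      fun z => ENNReal.ofReal_add (sq_nonneg _) (sq_nonneg _)
    rw [lintegral_congr this, lintegral_add_left hmw]
  -- pointwise bound on Iio 0
  have hpt : ∀ z ∈ Set.Iio (0 : ℝ), ENNReal.ofReal (((1 - z) / z) ^ 2 * f z ^ 2)
      ≤ 2 * ENNReal.ofReal ((f z / z) ^ 2) + 2 * ENNReal.ofReal (f z ^ 2) := by
    intro z hz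
    have hz0 : z ≠ 0 := (Set.mem_Iio.mp hz).ne
    have e : ((1 - z) / z) ^ 2 * f z ^ 2 = ((f z / z) - f z) ^ 2 := by
      rw [sub_div, div_self hz0]
      ring
    have hineq : ((f z / z) - f z) ^ 2 ≤ 2 * (f z / z) ^ 2 + 2 * f z ^ 2 := by
      nlinarith [sq_nonneg (f z / z + f z)]
    calc ENNReal.ofReal (((1 - z) / z) ^ 2 * f z ^ 2)
        ≤ ENNReal.ofReal (2 * (f z / z) ^ 2 + 2 * f z ^ 2) := by
          rw [e]; exact ENNReal.ofReal_le_ofReal hineq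
      _ = ENNReal.ofReal (2 * (f z / z) ^ 2) + ENNReal.ofReal (2 * f z ^ 2) :=
          ENNReal.ofReal_add (by positivity) (by positivity)
      _ = 2 * ENNReal.ofReal ((f z / z) ^ 2) + 2 * ENNReal.ofReal (f z ^ 2) := by
          rw [ENNReal.ofReal_mul (by norm_num : (0:ℝ) ≤ 2),
            ENNReal.ofReal_mul (by norm_num : (0:ℝ) ≤ 2), ENNReal.ofReal_ofNat]
  have h1 : ∫⁻ z in Set.Iio (0 : ℝ), ENNReal.ofReal (((1 - z) / z) ^ 2 * f z ^ 2)
      ≤ ∫⁻ z in Set.Iio (0 : ℝ),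
          (2 * ENNReal.ofReal ((f z / z) ^ 2) + 2 * ENNReal.ofReal (f z ^ 2)) :=
    lintegral_mono_ae ((ae_restrict_iff' measurableSet_Iio).mpr
      (Filter.Eventually.of_forall hpt))
  have h2 : ∫⁻ z in Set.Iio (0 : ℝ),
      (2 * ENNReal.ofReal ((f z / z) ^ 2) + 2 * ENNReal.ofReal (f z ^ 2))
      = 2 * A + 2 * B := by
    rw [lintegral_add_left (hmu.const_mul 2), lintegral_const_mul 2 hmu,
      lintegral_const_mul 2 hmw]
  have hhardy : A ≤ ENNReal.ofReal 4 * D := hardy_core f hf hsupp h0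
  have h4 : ENNReal.ofReal (4:ℝ) = (4 : ENNReal) := by
    rw [ENNReal.ofReal_ofNat]
  calc ∫⁻ z in Set.Iio (0 : ℝ), ENNReal.ofReal (((1 - z) / z) ^ 2 * f z ^ 2)
      ≤ 2 * A + 2 * B := le_of_le_of_eq h1 h2
    _ ≤ 2 * (4 * D) + 2 * B := by
        gcongr
        rw [← h4]; exact hhardy
    _ ≤ 10 * (B + D) := by
        rw [mul_add, ← mul_assoc]
        have e1 : (2 : ENNReal) * 4 * D ≤ 10 * D := by
          apply mul_le_mul_left
          norm_num
        have e2 : (2 : ENNReal) * B ≤ 10 * B := by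
          apply mul_le_mul_left
          norm_num
        calc 2 * 4 * D + 2 * B ≤ 10 * D + 10 * B := add_le_add e1 e2
          _ = 10 * B + 10 * D := by rw [add_comm]
    _ = ENNReal.ofReal 10 * ∫⁻ z in Set.Iio (0 : ℝ),
          ENNReal.ofReal (f z ^ 2 + deriv f z ^ 2) := by
        rw [hRHS, ENNReal.ofReal_ofNat]
end

section
/- Let Ω ⊆ ℝ³ be open and φ, v : Ω → ℝ twice continuously differentiable with ∂_zφ(x) ≠ 0 for every x ∈ Ω, and let v̇, φ̇ : Ω → ℝ be continuously differentiable. Then for every i ∈ {1,2,3} the pointwise identity holds on Ω: ∂_i^φ v̇ − (∂_z^φ v)·(∂_i^φ φ̇) = ∂_i^φ( v̇ − (∂_z^φ v)·φ̇ ) + φ̇ · ∂_z^φ(∂_i^φ v). -/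
/-- The `i`-th partial derivative of a function on `ℝ³` (coordinates `x = (y₁, y₂, z)`,
with `z` the coordinate of index `2`). -/
noncomputable def pd (i : Fin 3) (f : (Fin 3 → ℝ) → ℝ) (x : Fin 3 → ℝ) : ℝ :=
  fderiv ℝ f x (Pi.single i 1)

/-- The operators `∂ᵢ^φ` associated to `φ`:
`∂₁^φ f = ∂₁f − (∂₁φ/∂_zφ)∂_zf`, `∂₂^φ f = ∂₂f − (∂₂φ/∂_zφ)∂_zf`,
`∂₃^φ f = ∂_z^φ f = (1/∂_zφ)∂_zf`. -/
noncomputable def pdphi (φ : (Fin 3 → ℝ) → ℝ) (i : Fin 3) (f : (Fin 3 → ℝ) → ℝ)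
    (x : Fin 3 → ℝ) : ℝ :=
  if i = 2 then pd 2 f x / pd 2 φ x
  else pd i f x - pd i φ x / pd 2 φ x * pd 2 f x

section helpers
variable {f g : (Fin 3 → ℝ) → ℝ} {x : Fin 3 → ℝ}

lemma pd_sub (i : Fin 3) (hf : DifferentiableAt ℝ f x) (hg : DifferentiableAt ℝ g x) :
    pd i (fun y => f y - g y) x = pd i f x - pd i g x := by
  simp [pd, fderiv_fun_sub hf hg]

lemma pd_mul (i : Fin 3) (hf : DifferentiableAt ℝ f x) (hg : DifferentiableAt ℝ g x) :
    pd i (fun y => f y * g y) x = f x * pd i g x + g x * pd i f x := by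
  simp [pd, fderiv_fun_mul hf hg, mul_comm]

lemma pd_inv (i : Fin 3) (hg : DifferentiableAt ℝ g x) (hx : g x ≠ 0) :
    pd i (fun y => (g y)⁻¹) x = -(pd i g x) / g x ^ 2 := by
  have h := ((hasFDerivAt_inv' (𝕜 := ℝ) hx).comp x hg.hasFDerivAt).fderiv
  unfold pd
  rw [show (fun y => (g y)⁻¹) = Inv.inv ∘ g from rfl, h]
  simp only [ContinuousLinearMap.coe_comp', Function.comp_apply, ContinuousLinearMap.neg_apply,
    ContinuousLinearMap.mulLeftRight_apply]
  rw [sq]; field_simp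

lemma pd_div (i : Fin 3) (hf : DifferentiableAt ℝ f x) (hg : DifferentiableAt ℝ g x)
    (hx : g x ≠ 0) :
    pd i (fun y => f y / g y) x = (pd i f x * g x - f x * pd i g x) / g x ^ 2 := by
  have hinv : DifferentiableAt ℝ (fun y => (g y)⁻¹) x :=
    (differentiableAt_inv hx).comp x hg
  simp only [div_eq_mul_inv]
  rw [pd_mul i hf hinv, pd_inv i hg hx]
  field_simp
  ring

lemma diffAt_div (hf : DifferentiableAt ℝ f x) (hg : DifferentiableAt ℝ g x)
    (hx : g x ≠ 0) : DifferentiableAt ℝ (fun y => f y / g y) x := by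
  simp only [div_eq_mul_inv]
  exact hf.mul ((differentiableAt_inv hx).comp x hg)

lemma pd_contDiffOn {Ω : Set (Fin 3 → ℝ)} (hΩ : IsOpen Ω) (hf : ContDiffOn ℝ 2 f Ω)
    (j : Fin 3) : ContDiffOn ℝ 1 (pd j f) Ω :=
  (hf.fderiv_of_isOpen hΩ (by norm_num)).clm_apply contDiffOn_const

lemma pd_comm {Ω : Set (Fin 3 → ℝ)} (hΩ : IsOpen Ω) (hf : ContDiffOn ℝ 2 f Ω)
    (hx : x ∈ Ω) (i j : Fin 3) : pd i (pd j f) x = pd j (pd i f) x := by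
  have hfa : ContDiffAt ℝ 2 f x := (hf x hx).contDiffAt (hΩ.mem_nhds hx)
  have hd : DifferentiableAt ℝ (fderiv ℝ f) x :=
    (hfa.fderiv_right (m := 1) (by norm_num)).differentiableAt one_ne_zero
  have hs := hfa.isSymmSndFDerivAt (by simp [minSmoothness_of_isRCLikeNormedField])
  have key : ∀ e e' : Fin 3 → ℝ, fderiv ℝ (fun y => fderiv ℝ f y e) x e'
      = fderiv ℝ (fderiv ℝ f) x e' e := by
    intro e e'
    rw [fderiv_clm_apply hd (differentiableAt_const e)]
    simp
  show fderiv ℝ (fun y => fderiv ℝ f y (Pi.single j 1)) x (Pi.single i 1)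
      = fderiv ℝ (fun y => fderiv ℝ f y (Pi.single i 1)) x (Pi.single j 1)
  rw [key, key, hs]

end helpers

/-- Alinhac's "good unknown" cancellation, first-order identity (2.27) of Lemma 2.7:
`∂ᵢ^φ v̇ − (∂_z^φ v)(∂ᵢ^φ φ̇) = ∂ᵢ^φ(v̇ − (∂_z^φ v) φ̇) + φ̇ ∂_z^φ(∂ᵢ^φ v)`. -/
theorem alinhac_first_order (Ω : Set (Fin 3 → ℝ)) (hΩ : IsOpen Ω)
    (φ v vdot φdot : (Fin 3 → ℝ) → ℝ)
    (hφ : ContDiffOn ℝ 2 φ Ω) (hv : ContDiffOn ℝ 2 v Ω)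
    (hvdot : ContDiffOn ℝ 1 vdot Ω) (hφdot : ContDiffOn ℝ 1 φdot Ω)
    (hz : ∀ x ∈ Ω, pd 2 φ x ≠ 0) :
    ∀ i : Fin 3, ∀ x ∈ Ω,
      pdphi φ i vdot x - pdphi φ 2 v x * pdphi φ i φdot x
        = pdphi φ i (fun y => vdot y - pdphi φ 2 v y * φdot y) x
          + φdot x * pdphi φ 2 (pdphi φ i v) x := by
  intro i x hx
  have hmem := hΩ.mem_nhds hx
  have hq : pd 2 φ x ≠ 0 := hz x hx
  have dv : ∀ j : Fin 3, DifferentiableAt ℝ (pd j v) x := fun j =>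
    (((pd_contDiffOn hΩ hv j) x hx).contDiffAt hmem).differentiableAt one_ne_zero
  have dφ : ∀ j : Fin 3, DifferentiableAt ℝ (pd j φ) x := fun j =>
    (((pd_contDiffOn hΩ hφ j) x hx).contDiffAt hmem).differentiableAt one_ne_zero
  have dvdot : DifferentiableAt ℝ vdot x :=
    ((hvdot x hx).contDiffAt hmem).differentiableAt one_ne_zero
  have dφdot : DifferentiableAt ℝ φdot x :=
    ((hφdot x hx).contDiffAt hmem).differentiableAt one_ne_zero
  have hG : pdphi φ 2 v = fun y => pd 2 v y / pd 2 φ y := by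
    funext y; simp [pdphi]
  have dG : DifferentiableAt ℝ (fun y => pd 2 v y / pd 2 φ y) x :=
    diffAt_div (dv 2) (dφ 2) hq
  have dGφdot : DifferentiableAt ℝ (fun y => pd 2 v y / pd 2 φ y * φdot y) x :=
    dG.mul dφdot
  rcases eq_or_ne i 2 with hi | hi
  · subst hi
    simp only [pdphi, if_pos rfl, if_true, hG]
    rw [pd_sub 2 dvdot dGφdot, pd_mul 2 dG dφdot, pd_div 2 (dv 2) (dφ 2) hq]
    field_simp
    ring
  · have hH : pdphi φ i v = fun y => pd i v y - pd i φ y / pd 2 φ y * pd 2 v y := by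
      funext y; simp [pdphi, hi]
    have dφq : DifferentiableAt ℝ (fun y => pd i φ y / pd 2 φ y) x := diffAt_div (dφ i) (dφ 2) hq
    have dφqv : DifferentiableAt ℝ (fun y => pd i φ y / pd 2 φ y * pd 2 v y) x :=
      dφq.mul (dv 2)
    simp only [pdphi, if_pos rfl, if_true, if_neg hi, hG, hH]
    rw [pd_sub i dvdot dGφdot, pd_sub 2 dvdot dGφdot,
      pd_mul i dG dφdot, pd_mul 2 dG dφdot,
      pd_div i (dv 2) (dφ 2) hq, pd_div 2 (dv 2) (dφ 2) hq,
      pd_sub 2 (dv i) dφqv, pd_mul 2 dφq (dv 2), pd_div 2 (dφ i) (dφ 2) hq,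
      pd_comm hΩ hv hx 2 i, pd_comm hΩ hφ hx 2 i]
    field_simp
    ring
end

section
/- Let φ : ℝ³ → ℝ be twice continuously differentiable with ∂_zφ(x) ≠ 0 for all x, and let f, g : ℝ³ → ℝ be continuously differentiable with compact support. Then for every i ∈ {1,2,3}: ∫_S (∂_i^φ f) g ∂_zφ dy dz = − ∫_S f (∂_i^φ g) ∂_zφ dy dz + ∫_{ℝ²} f(y,0) g(y,0) N_i(y) dy, where N(y) = (−∂₁φ(y,0), −∂₂φ(y,0), 1). -/
open MeasureTheory Set

/-- The lower half-space `S = ℝ² × (−∞, 0)` of `ℝ³`. -/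
def lowerHalf : Set (Fin 3 → ℝ) := {x | x 2 < 0}

/-! ### auxiliary material -/

namespace IBPAux

lemma pd_contDiff {n : ℕ∞} {f : (Fin 3 → ℝ) → ℝ} (hf : ContDiff ℝ (n+1) f) (i : Fin 3) :
    ContDiff ℝ n (pd i f) := by
  have h1 : ContDiff ℝ n (fderiv ℝ f) := hf.fderiv_right le_rfl
  exact (ContinuousLinearMap.apply ℝ ℝ (Pi.single i 1)).contDiff.comp h1

lemma pd_continuous {f : (Fin 3 → ℝ) → ℝ} (hf : ContDiff ℝ 1 f) (i : Fin 3) :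
    Continuous (pd i f) := by
  have := pd_contDiff (n := 0) (by simpa using hf) i
  exact this.continuous

lemma pd_hasCompactSupport {f : (Fin 3 → ℝ) → ℝ} (hf : HasCompactSupport f) (i : Fin 3) :
    HasCompactSupport (pd i f) := by
  have h := hf.fderiv ℝ
  exact h.comp_left (g := fun L : (Fin 3 → ℝ) →L[ℝ] ℝ => L (Pi.single i 1)) rfl

lemma pd_mul {a b : (Fin 3 → ℝ) → ℝ} (ha : Differentiable ℝ a) (hb : Differentiable ℝ b)
    (i : Fin 3) (x : Fin 3 → ℝ) :
    pd i (fun y => a y * b y) x = pd i a x * b x + a x * pd i b x := by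
  unfold pd
  rw [fderiv_fun_mul (ha x) (hb x)]
  simp [mul_comm]
  ring

lemma pd_comm {φ : (Fin 3 → ℝ) → ℝ} (hφ : ContDiff ℝ 2 φ) (i j : Fin 3) (x : Fin 3 → ℝ) :
    pd i (pd j φ) x = pd j (pd i φ) x := by
  have hd : ∀ y, HasFDerivAt φ (fderiv ℝ φ y) y :=
    fun y => (hφ.differentiable (by norm_num) y).hasFDerivAt
  have hd2 : DifferentiableAt ℝ (fderiv ℝ φ) x := by
    have : ContDiff ℝ 1 (fderiv ℝ φ) := hφ.fderiv_right (by norm_num)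
    exact (this.differentiable (by norm_num)) x
  have hsymm := second_derivative_symmetric hd hd2.hasFDerivAt
  have key : ∀ v w : Fin 3 → ℝ,
      fderiv ℝ (fun y => fderiv ℝ φ y w) x v = fderiv ℝ (fderiv ℝ φ) x v w := by
    intro v w
    have : HasFDerivAt (fun y => fderiv ℝ φ y w)
        ((ContinuousLinearMap.apply ℝ ℝ w).comp (fderiv ℝ (fderiv ℝ φ) x)) x :=
      (ContinuousLinearMap.apply ℝ ℝ w).hasFDerivAt.comp x hd2.hasFDerivAt
    rw [this.fderiv]; rfl
  unfold pd
  rw [key, key, hsymm]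

/-- Insert `a` at position `i` (non-dependent version of `Fin.insertNth`). -/
def ins (i : Fin 3) (a : ℝ) (y : Fin 2 → ℝ) : Fin 3 → ℝ := Fin.insertNth i a y

lemma ins_apply_same' (i : Fin 3) (a : ℝ) (y : Fin 2 → ℝ) : ins i a y i = a :=
  Fin.insertNth_apply_same (α := fun _ => ℝ) i a y

lemma ins_apply_succAbove (i : Fin 3) (a : ℝ) (y : Fin 2 → ℝ) (k : Fin 2) :
    ins i a y (i.succAbove k) = y k :=
  Fin.insertNth_apply_succAbove (α := fun _ => ℝ) i a y k

lemma ins_apply_two {i : Fin 3} (hi : i ≠ 2) (a : ℝ) (y : Fin 2 → ℝ) : ins i a y 2 = y 1 := by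
  fin_cases i
  · rw [show (2:Fin 3) = (0:Fin 3).succAbove 1 from by decide]
    exact Fin.insertNth_apply_succAbove (α := fun _ => ℝ) 0 a y 1
  · rw [show (2:Fin 3) = (1:Fin 3).succAbove 1 from by decide]
    exact Fin.insertNth_apply_succAbove (α := fun _ => ℝ) 1 a y 1
  · exact absurd rfl hi

lemma ins_two_zero (y : Fin 2 → ℝ) : ins 2 0 y = ![y 0, y 1, 0] := by
  have h0 : ins 2 0 y 0 = y 0 := by
    rw [show (0:Fin 3) = (2:Fin 3).succAbove 0 from by decide]
    exact ins_apply_succAbove 2 0 y 0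
  have h1 : ins 2 0 y 1 = y 1 := by
    rw [show (1:Fin 3) = (2:Fin 3).succAbove 1 from by decide]
    exact ins_apply_succAbove 2 0 y 1
  have h2 : ins 2 0 y 2 = 0 := ins_apply_same' 2 0 y
  funext j
  fin_cases j
  · show ins 2 0 y 0 = ![y 0, y 1, 0] 0
    rw [h0]; simp
  · show ins 2 0 y 1 = ![y 0, y 1, 0] 1
    rw [h1]; simp
  · show ins 2 0 y 2 = ![y 0, y 1, 0] 2
    rw [h2]; simp

section sec
variable {h : (Fin 3 → ℝ) → ℝ} (i : Fin 3) (y : Fin 2 → ℝ)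

lemma insertNth_eq_add (a : ℝ) :
    ins i a y = ins i 0 y + a • (Pi.single i 1 : Fin 3 → ℝ) := by
  funext j
  rcases eq_or_ne j i with rfl | hj
  · rw [Pi.add_apply, ins_apply_same', ins_apply_same']
    simp
  · obtain ⟨k, rfl⟩ := Fin.exists_succAbove_eq hj
    rw [Pi.add_apply, ins_apply_succAbove, ins_apply_succAbove]
    simp [Pi.single_eq_of_ne (Fin.succAbove_ne i k)]

lemma hasDerivAt_section (hh : ContDiff ℝ 1 h) (a : ℝ) :
    HasDerivAt (fun a => h (ins i a y)) (pd i h (ins i a y)) a := by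
  have h1 : HasDerivAt (fun a : ℝ => ins i a y) (Pi.single i 1 : Fin 3 → ℝ) a := by
    have h2 : HasDerivAt (fun a : ℝ => ins i 0 y + a • (Pi.single i 1 : Fin 3 → ℝ))
        ((1:ℝ) • (Pi.single i 1 : Fin 3 → ℝ)) a :=
      ((hasDerivAt_id a).smul_const (Pi.single i 1 : Fin 3 → ℝ)).const_add _
    simp only [one_smul] at h2
    convert h2 using 1
    funext a; exact insertNth_eq_add i y a
  exact ((hh.differentiable (by norm_num) _).hasFDerivAt.comp_hasDerivAt a h1)

lemma contDiff_section (hh : ContDiff ℝ 1 h) :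
    ContDiff ℝ 1 (fun a => h (ins i a y)) := by
  apply hh.comp
  have : (fun a : ℝ => ins i a y)
      = fun a => ins i 0 y + a • (Pi.single i 1 : Fin 3 → ℝ) := by
    funext a; exact insertNth_eq_add i y a
  rw [this]
  exact contDiff_const.add (contDiff_id.smul contDiff_const)

lemma hasCompactSupport_section (hs : HasCompactSupport h) :
    HasCompactSupport (fun a => h (ins i a y)) := by
  obtain ⟨R, hR⟩ := (hs.isCompact.isBounded).subset_closedBall 0
  apply HasCompactSupport.intro (isCompact_Icc (a := -R) (b := R))
  intro a ha
  by_contra hne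
  have hmem : ins i a y ∈ tsupport h := subset_tsupport h hne
  have hRx : ‖ins i a y‖ ≤ R := by
    have := hR hmem; rwa [Metric.mem_closedBall, dist_zero_right] at this
  have hle : |a| ≤ R := by
    have h1 : ‖(ins i a y) i‖ ≤ ‖ins i a y‖ := norm_le_pi_norm _ i
    simp only [ins_apply_same', Real.norm_eq_abs] at h1
    linarith
  rw [abs_le] at hle
  exact ha ⟨hle.1, hle.2⟩

lemma integral_section_Iio (hh : ContDiff ℝ 1 h) (hs : HasCompactSupport h) :
    ∫ a in Iio (0:ℝ), pd i h (ins i a y) = h (ins i 0 y) := by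
  have key := (hasCompactSupport_section i y hs).integral_Iic_deriv_eq (contDiff_section i y hh) 0
  have hde : ∀ a : ℝ, deriv (fun a => h (ins i a y)) a
      = pd i h (ins i a y) := fun a => (hasDerivAt_section i y hh a).deriv
  rw [setIntegral_congr_set Iio_ae_eq_Iic]
  simp_rw [← hde]
  exact key

lemma integral_section_univ (hh : ContDiff ℝ 1 h) (hs : HasCompactSupport h) :
    ∫ a : ℝ, pd i h (ins i a y) = 0 := by
  have hcs := hasCompactSupport_section i y hs
  have hcd := contDiff_section i y hh
  have hde : ∀ a : ℝ, deriv (fun a => h (ins i a y)) a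
      = pd i h (ins i a y) := fun a => (hasDerivAt_section i y hh a).deriv
  have hint : Integrable (deriv fun a => h (ins i a y)) :=
    (hcd.continuous_deriv le_rfl).integrable_of_hasCompactSupport hcs.deriv
  simp_rw [← hde]
  rw [← setIntegral_univ, ← Set.Iic_union_Ioi (a := (0:ℝ)),
    setIntegral_union (Iic_disjoint_Ioi le_rfl) measurableSet_Ioi hint.integrableOn
      hint.integrableOn,
    hcs.integral_Iic_deriv_eq hcd, hcs.integral_Ioi_deriv_eq hcd]
  ring
end sec

/-- The insertion homeomorphism. -/
def insHomeo (i : Fin 3) : ℝ × (Fin 2 → ℝ) ≃ₜ (Fin 3 → ℝ) where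
  toEquiv := Fin.insertNthEquiv (fun _ => ℝ) i
  continuous_toFun := by
    apply continuous_pi
    intro j
    rcases eq_or_ne j i with rfl | hj
    · simpa [Fin.insertNthEquiv, Fin.insertNth_apply_same] using continuous_fst
    · obtain ⟨k, rfl⟩ := Fin.exists_succAbove_eq hj
      simpa [Fin.insertNthEquiv, Fin.insertNth_apply_succAbove] using
        (continuous_apply k).comp' continuous_snd
  continuous_invFun := by
    exact (continuous_apply i).prodMk (continuous_pi fun j => continuous_apply _)

lemma continuous_ins (i : Fin 3) : Continuous (fun p : ℝ × (Fin 2 → ℝ) => ins i p.1 p.2) :=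
  (insHomeo i).continuous

lemma hasCompactSupport_comp_ins {F : (Fin 3 → ℝ) → ℝ} (hFs : HasCompactSupport F)
    (i : Fin 3) : HasCompactSupport (fun p : ℝ × (Fin 2 → ℝ) => F (ins i p.1 p.2)) := by
  have := hFs.comp_homeomorph (insHomeo i)
  exact this

lemma transfer_eq (F : (Fin 3 → ℝ) → ℝ) (i : Fin 3) :
    ∫ x in lowerHalf, F x
      = ∫ p in {p : ℝ × (Fin 2 → ℝ) | (ins i p.1 p.2) 2 < 0},
          F (ins i p.1 p.2) ∂(volume.prod volume) := by
  have MP := (volume_preserving_piFinSuccAbove (fun _ : Fin 3 => ℝ) i).symm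
  have he : MeasurableEmbedding
      (MeasurableEquiv.piFinSuccAbove (fun _ : Fin 3 => ℝ) i).symm :=
    (MeasurableEquiv.piFinSuccAbove (fun _ : Fin 3 => ℝ) i).symm.measurableEmbedding
  have key := MP.setIntegral_preimage_emb he F lowerHalf
  rw [Measure.volume_eq_prod] at key
  rw [← key]
  rfl

set_option maxHeartbeats 1000000 in
lemma key_integral {h : (Fin 3 → ℝ) → ℝ} (hh : ContDiff ℝ 1 h) (hs : HasCompactSupport h)
    (i : Fin 3) :
    ∫ x in lowerHalf, pd i h x
      = if i = 2 then ∫ y : Fin 2 → ℝ, h (ins 2 0 y) else 0 := by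
  rw [transfer_eq (pd i h) i]
  have hGc : Continuous (fun p : ℝ × (Fin 2 → ℝ) => pd i h (ins i p.1 p.2)) :=
    (pd_continuous hh i).comp (continuous_ins i)
  have hGs : HasCompactSupport (fun p : ℝ × (Fin 2 → ℝ) => pd i h (ins i p.1 p.2)) :=
    hasCompactSupport_comp_ins (pd_hasCompactSupport hs i) i
  have hGint : Integrable (fun p : ℝ × (Fin 2 → ℝ) => pd i h (ins i p.1 p.2))
      (volume.prod volume) := by
    rw [← Measure.volume_eq_prod]
    exact hGc.integrable_of_hasCompactSupport hGs
  rcases eq_or_ne i 2 with rfl | hi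
  · rw [if_pos rfl]
    have hset : {p : ℝ × (Fin 2 → ℝ) | (ins 2 p.1 p.2) 2 < 0} = Iio (0:ℝ) ×ˢ univ := by
      ext ⟨a, y⟩
      simp [ins_apply_same' 2 a y]
    have hrs : (volume.prod volume).restrict (Iio (0:ℝ) ×ˢ (univ : Set (Fin 2 → ℝ)))
        = (volume.restrict (Iio 0)).prod volume := by
      rw [← Measure.prod_restrict, Measure.restrict_univ]
    have hint2 : Integrable (fun p : ℝ × (Fin 2 → ℝ) => pd 2 h (ins 2 p.1 p.2))
        ((volume.restrict (Iio 0)).prod volume) := by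
      rw [← hrs]; exact hGint.restrict
    have hswap := integral_prod_symm (μ := volume.restrict (Iio (0:ℝ)))
      (ν := (volume : Measure (Fin 2 → ℝ)))
      (fun p : ℝ × (Fin 2 → ℝ) => pd 2 h (ins 2 p.1 p.2)) hint2
    rw [hset, hrs, hswap]
    congr 1
    funext y
    exact integral_section_Iio 2 y hh hs
  · rw [if_neg hi]
    have hset : {p : ℝ × (Fin 2 → ℝ) | (ins i p.1 p.2) 2 < 0}
        = univ ×ˢ {y : Fin 2 → ℝ | y 1 < 0} := by
      ext ⟨a, y⟩
      simp [ins_apply_two hi a y]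
    have hrs : (volume.prod volume).restrict ((univ : Set ℝ) ×ˢ {y : Fin 2 → ℝ | y 1 < 0})
        = volume.prod (volume.restrict {y : Fin 2 → ℝ | y 1 < 0}) := by
      rw [← Measure.prod_restrict, Measure.restrict_univ]
    have hint2 : Integrable (fun p : ℝ × (Fin 2 → ℝ) => pd i h (ins i p.1 p.2))
        (volume.prod (volume.restrict {y : Fin 2 → ℝ | y 1 < 0})) := by
      rw [← hrs]; exact hGint.restrict
    have hswap := integral_prod_symm (μ := (volume : Measure ℝ))
      (ν := volume.restrict {y : Fin 2 → ℝ | y 1 < 0})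
      (fun p : ℝ × (Fin 2 → ℝ) => pd i h (ins i p.1 p.2)) hint2
    rw [hset, hrs, hswap]
    have hz : ∀ y : Fin 2 → ℝ, ∫ a : ℝ, pd i h (ins i a y) = 0 :=
      fun y => integral_section_univ i y hh hs
    simp_rw [hz]
    simp

lemma hcs_of_factor {v F : (Fin 3 → ℝ) → ℝ} (hv : HasCompactSupport v)
    (h0 : ∀ x, v x = 0 → F x = 0) : HasCompactSupport F :=
  HasCompactSupport.intro hv fun x hx => h0 x (image_eq_zero_of_notMem_tsupport hx)

section main
variable {φ f g : (Fin 3 → ℝ) → ℝ}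

lemma contDiff_pd2phi (hφ : ContDiff ℝ 2 φ) : ContDiff ℝ 1 (pd 2 φ) :=
  pd_contDiff (n := 1) (by norm_num; exact hφ) 2

lemma contDiff_pdiphi (hφ : ContDiff ℝ 2 φ) (i : Fin 3) : ContDiff ℝ 1 (pd i φ) :=
  pd_contDiff (n := 1) (by norm_num; exact hφ) i

lemma cont_pdphi (hφ : ContDiff ℝ 2 φ) (hz : ∀ x, pd 2 φ x ≠ 0) (hf : ContDiff ℝ 1 f)
    (i : Fin 3) : Continuous (pdphi φ i f) := by
  have hψ : Continuous (pd 2 φ) := (contDiff_pd2phi hφ).continuous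
  rcases eq_or_ne i 2 with rfl | hi
  · have he : pdphi φ 2 f = fun x => pd 2 f x / pd 2 φ x := by
      funext x; simp [pdphi]
    rw [he]
    exact (pd_continuous hf 2).div hψ hz
  · have he : pdphi φ i f = fun x => pd i f x - pd i φ x / pd 2 φ x * pd 2 f x := by
      funext x; simp [pdphi, if_neg hi]
    rw [he]
    exact (pd_continuous hf i).sub
      ((((contDiff_pdiphi hφ i).continuous).div hψ hz).mul (pd_continuous hf 2))

/-- case `i = 2` -/
lemma aux_two (hφ : ContDiff ℝ 2 φ) (hz : ∀ x, pd 2 φ x ≠ 0)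
    (hf : ContDiff ℝ 1 f) (hg : ContDiff ℝ 1 g)
    (hfs : HasCompactSupport f) (hgs : HasCompactSupport g) :
    ∫ x in lowerHalf, pdphi φ 2 f x * g x * pd 2 φ x
      = -(∫ x in lowerHalf, f x * pdphi φ 2 g x * pd 2 φ x)
        + ∫ y : Fin 2 → ℝ, f (ins 2 0 y) * g (ins 2 0 y) := by
  have hl : ∀ x, pdphi φ 2 f x * g x * pd 2 φ x = pd 2 f x * g x := by
    intro x
    simp only [pdphi, if_pos rfl, eq_self_iff_true, ↓reduceIte]
    field_simp [hz x]
  have hr : ∀ x, f x * pdphi φ 2 g x * pd 2 φ x = f x * pd 2 g x := by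
    intro x
    simp only [pdphi, if_pos rfl, eq_self_iff_true, ↓reduceIte]
    field_simp [hz x]
  simp_rw [hl, hr]
  have hfg : ContDiff ℝ 1 (fun x => f x * g x) := hf.mul hg
  have hfgs : HasCompactSupport (fun x => f x * g x) :=
    hcs_of_factor hfs (fun x hx => by simp [hx])
  have hkey := key_integral hfg hfgs 2
  rw [if_pos rfl] at hkey
  have hexp : ∀ x, pd 2 (fun y => f y * g y) x = pd 2 f x * g x + f x * pd 2 g x :=
    pd_mul (hf.differentiable (by norm_num)) (hg.differentiable (by norm_num)) 2
  simp_rw [hexp] at hkey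
  have int1 : IntegrableOn (fun x => pd 2 f x * g x) lowerHalf :=
    (((pd_continuous hf 2).mul hg.continuous).integrable_of_hasCompactSupport
      (hcs_of_factor hgs (fun x hx => by simp [hx]))).integrableOn
  have int2 : IntegrableOn (fun x => f x * pd 2 g x) lowerHalf :=
    ((hf.continuous.mul (pd_continuous hg 2)).integrable_of_hasCompactSupport
      (hcs_of_factor hfs (fun x hx => by simp [hx]))).integrableOn
  rw [integral_add int1 int2] at hkey
  linarith

/-- case `i ≠ 2` -/
lemma aux_ne_two (hφ : ContDiff ℝ 2 φ) (hz : ∀ x, pd 2 φ x ≠ 0)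
    (hf : ContDiff ℝ 1 f) (hg : ContDiff ℝ 1 g)
    (hfs : HasCompactSupport f) (hgs : HasCompactSupport g) {i : Fin 3} (hi : i ≠ 2) :
    ∫ x in lowerHalf, pdphi φ i f x * g x * pd 2 φ x
      = -(∫ x in lowerHalf, f x * pdphi φ i g x * pd 2 φ x)
        - ∫ y : Fin 2 → ℝ, f (ins 2 0 y) * g (ins 2 0 y) * pd i φ (ins 2 0 y) := by
  have hψ : ContDiff ℝ 1 (pd 2 φ) := contDiff_pd2phi hφ
  have hχ : ContDiff ℝ 1 (pd i φ) := contDiff_pdiphi hφ i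
  have hfd : Differentiable ℝ f := hf.differentiable (by norm_num)
  have hgd : Differentiable ℝ g := hg.differentiable (by norm_num)
  have hfgd : Differentiable ℝ (fun y => f y * g y) := hfd.mul hgd
  set A : (Fin 3 → ℝ) → ℝ := fun x => f x * g x * pd 2 φ x with hA_def
  set B : (Fin 3 → ℝ) → ℝ := fun x => f x * g x * pd i φ x with hB_def
  have hA : ContDiff ℝ 1 A := (hf.mul hg).mul hψ
  have hB : ContDiff ℝ 1 B := (hf.mul hg).mul hχ
  have hAs : HasCompactSupport A := hcs_of_factor hfs (fun x hx => by simp [hA_def, hx])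
  have hBs : HasCompactSupport B := hcs_of_factor hfs (fun x hx => by simp [hB_def, hx])
  -- pointwise identity
  have hpoint : ∀ x, pdphi φ i f x * g x * pd 2 φ x + f x * pdphi φ i g x * pd 2 φ x
      = pd i A x - pd 2 B x := by
    intro x
    have e1 : pd i A x = (pd i f x * g x + f x * pd i g x) * pd 2 φ x
        + f x * g x * pd i (pd 2 φ) x := by
      rw [hA_def, pd_mul hfgd (hψ.differentiable (by norm_num)) i x,
        pd_mul hfd hgd i x]
    have e2 : pd 2 B x = (pd 2 f x * g x + f x * pd 2 g x) * pd i φ x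
        + f x * g x * pd 2 (pd i φ) x := by
      rw [hB_def, pd_mul hfgd (hχ.differentiable (by norm_num)) 2 x,
        pd_mul hfd hgd 2 x]
    rw [e1, e2, pd_comm hφ i 2 x]
    simp only [pdphi, if_neg hi]
    field_simp [hz x]
    ring
  -- integrability
  have intP : IntegrableOn (fun x => pdphi φ i f x * g x * pd 2 φ x) lowerHalf :=
    ((((cont_pdphi hφ hz hf i).mul hg.continuous).mul
        hψ.continuous).integrable_of_hasCompactSupport
      (hcs_of_factor hgs (fun x hx => by simp [hx]))).integrableOn
  have intQ : IntegrableOn (fun x => f x * pdphi φ i g x * pd 2 φ x) lowerHalf :=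
    (((hf.continuous.mul (cont_pdphi hφ hz hg i)).mul
        hψ.continuous).integrable_of_hasCompactSupport
      (hcs_of_factor hfs (fun x hx => by simp [hx]))).integrableOn
  have intA : IntegrableOn (pd i A) lowerHalf :=
    ((pd_continuous hA i).integrable_of_hasCompactSupport
      (pd_hasCompactSupport hAs i)).integrableOn
  have intB : IntegrableOn (pd 2 B) lowerHalf :=
    ((pd_continuous hB 2).integrable_of_hasCompactSupport
      (pd_hasCompactSupport hBs 2)).integrableOn
  have hsum : (∫ x in lowerHalf, pdphi φ i f x * g x * pd 2 φ x)
      + ∫ x in lowerHalf, f x * pdphi φ i g x * pd 2 φ x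
      = (∫ x in lowerHalf, pd i A x) - ∫ x in lowerHalf, pd 2 B x := by
    rw [← integral_add intP intQ, ← integral_sub intA intB]
    exact integral_congr_ae (ae_of_all _ hpoint)
  have hkeyA := key_integral hA hAs i
  rw [if_neg hi] at hkeyA
  have hkeyB := key_integral hB hBs 2
  rw [if_pos rfl] at hkeyB
  rw [hkeyA, hkeyB] at hsum
  simp only [hB_def] at hsum
  linarith

end main
end IBPAux

open IBPAux in
/-- Integration by parts formula (2.9) of Lemma 2.2:
`∫_S (∂ᵢ^φ f) g ∂_zφ = − ∫_S f (∂ᵢ^φ g) ∂_zφ + ∫_{ℝ²} f g Nᵢ dy`,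
where `N(y) = (−∂₁φ(y,0), −∂₂φ(y,0), 1)`. -/
theorem integration_by_parts_pdphi (φ : (Fin 3 → ℝ) → ℝ) (hφ : ContDiff ℝ 2 φ)
    (hz : ∀ x, pd 2 φ x ≠ 0)
    (f g : (Fin 3 → ℝ) → ℝ) (hf : ContDiff ℝ 1 f) (hg : ContDiff ℝ 1 g)
    (hfs : HasCompactSupport f) (hgs : HasCompactSupport g) (i : Fin 3) :
    ∫ x in lowerHalf, pdphi φ i f x * g x * pd 2 φ x
      = -(∫ x in lowerHalf, f x * pdphi φ i g x * pd 2 φ x)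
        + ∫ y : Fin 2 → ℝ,
            f ![y 0, y 1, 0] * g ![y 0, y 1, 0] *
              (![-(pd 0 φ ![y 0, y 1, 0]), -(pd 1 φ ![y 0, y 1, 0]), 1] i) := by
  fin_cases i
  · show ∫ x in lowerHalf, pdphi φ 0 f x * g x * pd 2 φ x
      = -(∫ x in lowerHalf, f x * pdphi φ 0 g x * pd 2 φ x)
        + ∫ y : Fin 2 → ℝ,
            f ![y 0, y 1, 0] * g ![y 0, y 1, 0] *
              (![-(pd 0 φ ![y 0, y 1, 0]), -(pd 1 φ ![y 0, y 1, 0]), 1] 0)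
    have h := aux_ne_two hφ hz hf hg hfs hgs (i := 0) (by decide)
    simp_rw [ins_two_zero] at h
    rw [h, sub_eq_add_neg]
    congr 1
    rw [← integral_neg]
    congr 1
    funext y
    simp only [Matrix.cons_val_zero]
    ring
  · show ∫ x in lowerHalf, pdphi φ 1 f x * g x * pd 2 φ x
      = -(∫ x in lowerHalf, f x * pdphi φ 1 g x * pd 2 φ x)
        + ∫ y : Fin 2 → ℝ,
            f ![y 0, y 1, 0] * g ![y 0, y 1, 0] *
              (![-(pd 0 φ ![y 0, y 1, 0]), -(pd 1 φ ![y 0, y 1, 0]), 1] 1)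
    have h := aux_ne_two hφ hz hf hg hfs hgs (i := 1) (by decide)
    simp_rw [ins_two_zero] at h
    rw [h, sub_eq_add_neg]
    congr 1
    rw [← integral_neg]
    congr 1
    funext y
    simp only [Matrix.cons_val_one, Matrix.head_cons, Matrix.cons_val_zero]
    ring
  · show ∫ x in lowerHalf, pdphi φ 2 f x * g x * pd 2 φ x
      = -(∫ x in lowerHalf, f x * pdphi φ 2 g x * pd 2 φ x)
        + ∫ y : Fin 2 → ℝ,
            f ![y 0, y 1, 0] * g ![y 0, y 1, 0] *
              (![-(pd 0 φ ![y 0, y 1, 0]), -(pd 1 φ ![y 0, y 1, 0]), 1] 2)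
    have h := aux_two hφ hz hf hg hfs hgs
    simp_rw [ins_two_zero] at h
    rw [h]
    congr 1
    congr 1
    funext y
    simp
end

section
/- Let m, c₀ > 0. Let a₀ ∈ ℝ with a₀ ≥ m, and let a = (a_{ij})_{1≤i,j≤3} be a real symmetric 3×3 matrix with a₃₃ ≥ m and ηᵀ a η ≥ c₀|η|² for all η ∈ ℝ³. Let γ̃ ≥ 0, τ̃ ∈ ℝ and ξ̃ = (ξ̃₁,ξ̃₂) ∈ ℝ² satisfy γ̃² + τ̃² + |ξ̃|⁴ = 1. Define the 2×2 complex matrix 𝒜 with rows (0, 1) and ( (a₀/a₃₃)(γ̃ + iτ̃) + Σ_{1≤i,j≤2} (a_{ij}/a₃₃) ξ̃_i ξ̃_j , −2i Σ_{k=1}^{2} (a_{k3}/a₃₃) ξ̃_k ). Then 𝒜 has no purely imaginary eigenvalue: for every λ ∈ ℝ, det(𝒜 − iλ·Id) ≠ 0. -/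
/-- First step of the proof of Lemma 10.5: the symbol `𝒜(a, ζ̃)` of the parabolic
boundary-value problem has no purely imaginary eigenvalue on the parabolic unit sphere. -/
theorem symbol_no_imaginary_eigenvalue (m c₀ : ℝ) (hm : 0 < m) (hc₀ : 0 < c₀)
    (a₀ : ℝ) (a : Fin 3 → Fin 3 → ℝ)
    (ha₀ : m ≤ a₀) (hsym : ∀ i j, a i j = a j i) (h33 : m ≤ a 2 2)
    (hell : ∀ η : Fin 3 → ℝ, c₀ * (∑ i : Fin 3, η i ^ 2)
        ≤ ∑ i : Fin 3, ∑ j : Fin 3, η i * a i j * η j)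
    (γ τ : ℝ) (ξ : Fin 2 → ℝ) (hγ : 0 ≤ γ)
    (hsphere : γ ^ 2 + τ ^ 2 + (∑ i : Fin 2, ξ i ^ 2) ^ 2 = 1) :
    ∀ lam : ℝ,
      Matrix.det
        ((!![0, 1;
            ((a₀ / a 2 2 : ℝ) : ℂ) * ((γ : ℂ) + (τ : ℂ) * Complex.I)
              + ((∑ i : Fin 2, ∑ j : Fin 2,
                    a i.castSucc j.castSucc / a 2 2 * ξ i * ξ j : ℝ) : ℂ),
            (-2) * Complex.I
              * ((∑ k : Fin 2, a k.castSucc 2 / a 2 2 * ξ k : ℝ) : ℂ)] :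
              Matrix (Fin 2) (Fin 2) ℂ)
          - (Complex.I * (lam : ℂ)) • (1 : Matrix (Fin 2) (Fin 2) ℂ)) ≠ 0 := by
  intro lam h
  have ha33 : (0:ℝ) < a 2 2 := lt_of_lt_of_le hm h33
  have ha0 : (0:ℝ) < a₀ := lt_of_lt_of_le hm ha₀
  set S : ℝ := ∑ k : Fin 2, a k.castSucc 2 / a 2 2 * ξ k with hS
  set Q : ℝ := ∑ i : Fin 2, ∑ j : Fin 2, a i.castSucc j.castSucc / a 2 2 * ξ i * ξ j with hQ
  rw [Matrix.det_fin_two] at h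
  simp [Matrix.smul_apply, Matrix.one_apply] at h
  simp [Complex.ext_iff] at h
  obtain ⟨hre, him⟩ := h
  have hτ : τ = 0 := by
    rcases him with (h' | h') | h'
    · exact absurd h' ha0.ne'
    · exact absurd h' ha33.ne'
    · exact h'
  set η : Fin 3 → ℝ := ![ξ 0, ξ 1, lam] with hη
  have e02 : a 0 2 = a 2 0 := hsym 0 2
  have e12 : a 1 2 = a 2 1 := hsym 1 2
  have hQa : ∑ i : Fin 3, ∑ j : Fin 3, η i * a i j * η j
      = a 2 2 * (Q + 2 * lam * S + lam ^ 2) := by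
    simp only [hη, hQ, hS, Fin.sum_univ_three, Fin.sum_univ_two,
      Matrix.cons_val_zero, Matrix.cons_val_one, Matrix.head_cons,
      Matrix.cons_val_two, Matrix.tail_cons,
      show ((0 : Fin 2).castSucc = (0 : Fin 3)) from rfl,
      show ((1 : Fin 2).castSucc = (1 : Fin 3)) from rfl]
    field_simp
    ring_nf
    linear_combination (-(ξ 0 * lam)) * e02 + (-(ξ 1 * lam)) * e12
  have hE := hell η
  rw [hQa] at hE
  have hne : a 2 2 ≠ 0 := ha33.ne'
  have hT : a 2 2 * (Q + 2 * lam * S + lam ^ 2) = -(a₀ * γ) := by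
    field_simp at hre ⊢
    linarith [hre]
  have hηsq : ∑ i : Fin 3, η i ^ 2 = ξ 0 ^ 2 + ξ 1 ^ 2 + lam ^ 2 := by
    simp [hη, Fin.sum_univ_three]
  rw [hηsq, hT] at hE
  have hnn : (0:ℝ) ≤ ξ 0 ^ 2 + ξ 1 ^ 2 + lam ^ 2 := by positivity
  have h1 : (0:ℝ) ≤ c₀ * (ξ 0 ^ 2 + ξ 1 ^ 2 + lam ^ 2) := mul_nonneg hc₀.le hnn
  have hγ0 : a₀ * γ = 0 := le_antisymm (by linarith) (mul_nonneg ha0.le hγ)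
  have hsq : ξ 0 ^ 2 + ξ 1 ^ 2 + lam ^ 2 = 0 := by nlinarith
  have hγz : γ = 0 := by
    rcases mul_eq_zero.mp hγ0 with h' | h'
    · exact absurd h' ha0.ne'
    · exact h'
  have hx0 : ξ 0 = 0 := by
    have h2 : ξ 0 ^ 2 = 0 := le_antisymm (by linarith [hsq, sq_nonneg (ξ 1), sq_nonneg lam]) (sq_nonneg _)
    exact (pow_eq_zero_iff two_ne_zero).mp h2
  have hx1 : ξ 1 = 0 := by
    have h2 : ξ 1 ^ 2 = 0 := le_antisymm (by linarith [hsq, sq_nonneg (ξ 0), sq_nonneg lam]) (sq_nonneg _)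
    exact (pow_eq_zero_iff two_ne_zero).mp h2
  rw [Fin.sum_univ_two, hγz, hτ, hx0, hx1] at hsphere
  norm_num at hsphere
end
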